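/- Let E be a real inner product space and let f : E → ℝ be differentiable, convex on all of E, and β-smooth for some β > 0 (i.e. ∇f is Lipschitz with constant β). Then the gradient of f is (1/β)-co-coercive: for all u, v ∈ E, ⟪∇f(u) − ∇f(v), u − v⟫ ≥ (1/β) · ‖∇f(u) − ∇f(v)‖². -/

import Mathlib

open scoped NNReal RealInnerProductSpace

section Aux

variable {E : Type*} [NormedAddCommGroup E] [InnerProductSpace ℝ E] [CompleteSpace E]

/-- Derivative of a function along a line. -/
lemma line_hasDerivAt (f : E → ℝ) (hdiff : Differentiable ℝ f) (x d : E) (t : ℝ) :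
    HasDerivAt (fun s : ℝ => f (x + s • d)) ⟪gradient f (x + t • d), d⟫ t := by
  have hF : HasFDerivAt f ((InnerProductSpace.toDual ℝ E) (gradient f (x + t • d)))
      (x + t • d) :=
    (hasGradientAt_iff_hasFDerivAt).1 (hdiff (x + t • d)).hasGradientAt
  have hline : HasDerivAt (fun s : ℝ => x + s • d) d t := by
    simpa using ((hasDerivAt_id t).smul_const d).const_add x
  exact (hF.comp_hasDerivAt t hline).congr_deriv (by simp [InnerProductSpace.toDual_apply_apply])

/-- First-order condition for convexity. -/
lemma convex_first_order (f : E → ℝ) (hdiff : Differentiable ℝ f)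
    (hconv : ConvexOn ℝ Set.univ f) (u v : E) :
    f u + ⟪gradient f u, v - u⟫ ≤ f v := by
  set φ : ℝ → ℝ := fun s => f (u + s • (v - u)) with hφ
  have hconvφ : ConvexOn ℝ Set.univ φ := by
    have := hconv.comp_affineMap (AffineMap.lineMap u v : ℝ →ᵃ[ℝ] E)
    simpa [Set.preimage_univ, Function.comp_def, AffineMap.lineMap_apply_module', hφ,
      add_comm] using this
  have hd : HasDerivAt φ ⟪gradient f (u + (0:ℝ) • (v - u)), v - u⟫ 0 :=
    line_hasDerivAt f hdiff u (v - u) 0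
  have hslope := hconvφ.le_slope_of_hasDerivAt (Set.mem_univ (0:ℝ)) (Set.mem_univ (1:ℝ))
    one_pos (by simpa using hd)
  have : ⟪gradient f u, v - u⟫ ≤ f v - f u := by
    simpa [slope, φ] using hslope
  linarith

/-- Descent lemma for β-smooth functions. -/
lemma descent_lemma (f : E → ℝ) (β : ℝ≥0) (hdiff : Differentiable ℝ f)
    (hsmooth : LipschitzWith β (gradient f)) (x y : E) :
    f y ≤ f x + ⟪gradient f x, y - x⟫ + (β : ℝ) / 2 * ‖y - x‖ ^ 2 := by
  set d : E := y - x with hd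
  set φ' : ℝ → ℝ := fun t => ⟪gradient f (x + t • d), d⟫ with hφ'
  have hderiv : ∀ t : ℝ, HasDerivAt (fun s : ℝ => f (x + s • d)) (φ' t) t :=
    fun t => line_hasDerivAt f hdiff x d t
  have hcont : Continuous φ' := by
    apply Continuous.inner
    · exact hsmooth.continuous.comp (by continuity)
    · exact continuous_const
  have hftc : (∫ t in (0:ℝ)..1, φ' t) = f (x + (1:ℝ) • d) - f (x + (0:ℝ) • d) :=
    intervalIntegral.integral_eq_sub_of_hasDerivAt
      (fun t _ => hderiv t) (hcont.intervalIntegrable 0 1)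
  have hbound : ∀ t ∈ Set.Icc (0:ℝ) 1, φ' t ≤ φ' 0 + (β : ℝ) * ‖d‖ ^ 2 * t := by
    intro t ht
    have h1 : φ' t - φ' 0 = ⟪gradient f (x + t • d) - gradient f (x + (0:ℝ) • d), d⟫ := by
      simp [hφ', inner_sub_left]
    have h2 : ⟪gradient f (x + t • d) - gradient f (x + (0:ℝ) • d), d⟫ ≤
        ‖gradient f (x + t • d) - gradient f (x + (0:ℝ) • d)‖ * ‖d‖ :=
      real_inner_le_norm _ _
    have h3 : ‖gradient f (x + t • d) - gradient f (x + (0:ℝ) • d)‖ ≤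
        (β : ℝ) * ‖(x + t • d) - (x + (0:ℝ) • d)‖ := by
      simpa [dist_eq_norm] using hsmooth.dist_le_mul (x + t • d) (x + (0:ℝ) • d)
    have h4 : ‖(x + t • d) - (x + (0:ℝ) • d)‖ = t * ‖d‖ := by
      simp [norm_smul, abs_of_nonneg ht.1]
    have h5 : φ' t - φ' 0 ≤ (β : ℝ) * (t * ‖d‖) * ‖d‖ := by
      rw [h1]
      refine h2.trans ?_
      rw [← h4]
      exact mul_le_mul_of_nonneg_right h3 (norm_nonneg d)
    have h6 : (β : ℝ) * (t * ‖d‖) * ‖d‖ = (β : ℝ) * ‖d‖ ^ 2 * t := by ring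
    linarith
  have hint_mono : (∫ t in (0:ℝ)..1, φ' t) ≤
      ∫ t in (0:ℝ)..1, (φ' 0 + (β : ℝ) * ‖d‖ ^ 2 * t) := by
    apply intervalIntegral.integral_mono_on zero_le_one
      (hcont.intervalIntegrable 0 1)
      ((continuous_const.add (continuous_const.mul continuous_id)).intervalIntegrable 0 1)
      hbound
  have hint_val : (∫ t in (0:ℝ)..1, (φ' 0 + (β : ℝ) * ‖d‖ ^ 2 * t)) =
      φ' 0 + (β : ℝ) * ‖d‖ ^ 2 / 2 := by
    rw [intervalIntegral.integral_add (f := fun _ => φ' 0)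
      (g := fun t : ℝ => (β : ℝ) * ‖d‖ ^ 2 * t) (intervalIntegrable_const)
      ((continuous_const.mul continuous_id').intervalIntegrable 0 1),
      intervalIntegral.integral_const_mul, integral_id]
    norm_num
    ring
  have hφ0 : φ' 0 = ⟪gradient f x, d⟫ := by simp [hφ']
  have h1 : f (x + (1:ℝ) • d) = f y := by simp [hd]
  have h0 : f (x + (0:ℝ) • d) = f x := by simp
  rw [h1, h0] at hftc
  have hfinal := hint_mono.trans_eq hint_val
  rw [hftc, hφ0] at hfinal
  linarith

/-- Key lemma: lower quadratic bound with gradient difference. -/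
lemma key_lower_bound (f : E → ℝ) (β : ℝ≥0) (hβ : 0 < β)
    (hdiff : Differentiable ℝ f) (hconv : ConvexOn ℝ Set.univ f)
    (hsmooth : LipschitzWith β (gradient f)) (u v : E) :
    f u + ⟪gradient f u, v - u⟫ + 1 / (2 * (β : ℝ)) * ‖gradient f v - gradient f u‖ ^ 2
      ≤ f v := by
  have hβ' : (0:ℝ) < β := hβ
  set g : E := gradient f v - gradient f u with hg
  set w : E := v - ((β : ℝ))⁻¹ • g with hw
  have hA : f u + ⟪gradient f u, w - u⟫ ≤ f w := convex_first_order f hdiff hconv u w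
  have hB : f w ≤ f v + ⟪gradient f v, w - v⟫ + (β : ℝ) / 2 * ‖w - v‖ ^ 2 :=
    descent_lemma f β hdiff hsmooth v w
  have hwv : w - v = -(((β : ℝ))⁻¹ • g) := by rw [hw]; abel
  have hBv : ⟪gradient f v, w - v⟫ = -((β : ℝ))⁻¹ * ⟪gradient f v, g⟫ := by
    rw [hwv]; simp [inner_smul_right]
  have hnorm : ‖w - v‖ ^ 2 = ((β : ℝ))⁻¹ ^ 2 * ‖g‖ ^ 2 := by
    rw [hwv, norm_neg, norm_smul]
    simp [abs_of_nonneg (inv_nonneg.2 hβ'.le), mul_pow]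
  have hwu : ⟪gradient f u, w - u⟫ =
      ⟪gradient f u, v - u⟫ - ((β : ℝ))⁻¹ * ⟪gradient f u, g⟫ := by
    have : w - u = (v - u) - ((β : ℝ))⁻¹ • g := by rw [hw]; abel
    rw [this, inner_sub_right, inner_smul_right]
  have hgg : ⟪gradient f v, g⟫ - ⟪gradient f u, g⟫ = ‖g‖ ^ 2 := by
    rw [hg, ← inner_sub_left, real_inner_self_eq_norm_sq]
  rw [hBv, hnorm] at hB
  rw [hwu] at hA
  have hfield : (β : ℝ) / 2 * (((β : ℝ))⁻¹ ^ 2 * ‖g‖ ^ 2) = 1 / (2 * (β : ℝ)) * ‖g‖ ^ 2 := by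
    field_simp
  have h6 : ((β : ℝ))⁻¹ * ⟪gradient f v, g⟫ - ((β : ℝ))⁻¹ * ⟪gradient f u, g⟫ =
      ((β : ℝ))⁻¹ * ‖g‖ ^ 2 := by rw [← mul_sub, hgg]
  have h5 : ((β : ℝ))⁻¹ * ‖g‖ ^ 2 = 2 * (1 / (2 * (β : ℝ)) * ‖g‖ ^ 2) := by
    field_simp
  linarith [hA, hB]

end Aux

/-- **Baillon–Haddad co-coercivity.** If `f` is differentiable, convex on all
of `E`, and `β`-smooth (its gradient is `β`-Lipschitz) for some `β > 0`, then
the gradient of `f` is `(1/β)`-co-coercive: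
`⟪∇f u − ∇f v, u − v⟫ ≥ (1/β) ‖∇f u − ∇f v‖²`. -/
theorem gradient_cocoercive
    {E : Type*} [NormedAddCommGroup E] [InnerProductSpace ℝ E] [CompleteSpace E]
    (f : E → ℝ) (β : ℝ≥0) (hβ : 0 < β)
    (hdiff : Differentiable ℝ f)
    (hconv : ConvexOn ℝ Set.univ f)
    (hsmooth : LipschitzWith β (gradient f)) :
    ∀ u v : E,
      (1 / (β : ℝ)) * ‖gradient f u - gradient f v‖ ^ 2 ≤
        ⟪gradient f u - gradient f v, u - v⟫ := by
  intro u v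
  have h1 := key_lower_bound f β hβ hdiff hconv hsmooth u v
  have h2 := key_lower_bound f β hβ hdiff hconv hsmooth v u
  have hsymm : ‖gradient f v - gradient f u‖ = ‖gradient f u - gradient f v‖ :=
    norm_sub_rev _ _
  rw [hsymm] at h1
  have hinner1 : ⟪gradient f u, v - u⟫ = -⟪gradient f u, u - v⟫ := by
    rw [← inner_neg_right]; congr 1; abel
  have hinner2 : ⟪gradient f u - gradient f v, u - v⟫ =
      ⟪gradient f u, u - v⟫ - ⟪gradient f v, u - v⟫ := inner_sub_left _ _ _
  rw [hinner1] at h1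
  rw [hinner2]
  have hβ' : (0:ℝ) < β := hβ
  have h3 : 2 * (1 / (2 * (β : ℝ)) * ‖gradient f u - gradient f v‖ ^ 2) =
      1 / (β : ℝ) * ‖gradient f u - gradient f v‖ ^ 2 := by
    field_simp
  linarith [h1, h2]
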